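/- Let c > 1 be a real number, let u_1, …, u_n be distinct elements of a set Ω, and let w : Ω → ℝ satisfy w(u_i) ≥ 0 for all i. Let S_0 = ∅ and suppose that for each i ∈ {1,…,n}, either S_i = S_{i−1} ∪ {u_i}, or S_i = (S_{i−1} \ {u'_i}) ∪ {u_i} for some u'_i ∈ S_{i−1} with w(u_i) ≥ c · w(u'_i). Then ∑_{i=1}^{n} w(u_i) ≤ (c/(c−1)) · ∑_{u ∈ S_n} w(u). -/

import Mathlib

open Finset

/-- If in each round the algorithm either adds the new element `u_i` or replaces
an element `u'_i` of the current set with `u_i` such that `w(u_i) ≥ c · w(u'_i)`,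
then the total weight of all accepted elements is at most `c/(c−1)` times the
weight of the final set. -/
theorem total_accepted_weight_le (c : ℝ) (hc : 1 < c)
    {Ω : Type*} [DecidableEq Ω]
    (n : ℕ) (u : Fin n → Ω) (hu : Function.Injective u)
    (w : Ω → ℝ) (hw : ∀ i : Fin n, 0 ≤ w (u i))
    (S : ℕ → Finset Ω) (hS0 : S 0 = ∅)
    (hstep : ∀ i : Fin n,
      S ((i : ℕ) + 1) = insert (u i) (S (i : ℕ)) ∨
        ∃ u' ∈ S (i : ℕ), S ((i : ℕ) + 1) = insert (u i) ((S (i : ℕ)).erase u') ∧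
          c * w u' ≤ w (u i)) :
    ∑ i : Fin n, w (u i) ≤ (c / (c - 1)) * ∑ x ∈ S n, w x := by
  have hc1 : 0 < c - 1 := by linarith
  have hr1 : 1 ≤ c / (c - 1) := by
    rw [le_div_iff₀ hc1]; linarith
  have key : ∀ k, k ≤ n →
      (S k ⊆ (Finset.univ.filter (fun i : Fin n => (i : ℕ) < k)).image u) ∧
      ∑ i ∈ Finset.univ.filter (fun i : Fin n => (i : ℕ) < k), w (u i)
        ≤ (c / (c - 1)) * ∑ x ∈ S k, w x := by
    intro k
    induction k with
    | zero =>
      intro _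
      constructor
      · simp [hS0]
      · simp [hS0]
    | succ k ih =>
      intro hk
      obtain ⟨hsub, hsum⟩ := ih (Nat.le_of_succ_le hk)
      set i : Fin n := ⟨k, hk⟩ with hi
      have hik : (i : ℕ) = k := rfl
      -- u i ∉ S k
      have hnotin : u i ∉ S k := by
        intro hmem
        obtain ⟨j, hj, hji⟩ := Finset.mem_image.mp (hsub hmem)
        have := hu hji
        simp only [Finset.mem_filter] at hj
        omega
      -- filter splits
      have hfilt : (Finset.univ.filter (fun j : Fin n => (j : ℕ) < k + 1))
          = insert i (Finset.univ.filter (fun j : Fin n => (j : ℕ) < k)) := by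
        ext j
        simp only [Finset.mem_filter, Finset.mem_insert, Finset.mem_univ, true_and]
        constructor
        · intro h
          rcases Nat.lt_succ_iff_lt_or_eq.mp h with h | h
          · right; exact h
          · left; exact Fin.ext h
        · rintro (rfl | h)
          · omega
          · omega
      have hinotin : i ∉ Finset.univ.filter (fun j : Fin n => (j : ℕ) < k) := by
        simp [hik]
      have hsum' : ∑ j ∈ Finset.univ.filter (fun j : Fin n => (j : ℕ) < k + 1), w (u j)
          = w (u i) + ∑ j ∈ Finset.univ.filter (fun j : Fin n => (j : ℕ) < k), w (u j) := by
        rw [hfilt, Finset.sum_insert hinotin]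
      rcases hstep i with hcase | ⟨u', hu'S, hSeq, hcw⟩
      · -- insertion case
        rw [hik] at hcase
        constructor
        · rw [hcase, hfilt, Finset.image_insert]
          exact Finset.insert_subset_insert _ hsub
        · rw [hsum', hcase, Finset.sum_insert hnotin, mul_add]
          have h1 : w (u i) ≤ (c / (c - 1)) * w (u i) :=
            le_mul_of_one_le_left (hw i) hr1
          linarith
      · -- replacement case
        rw [hik] at hSeq
        constructor
        · rw [hSeq, hfilt, Finset.image_insert]
          exact Finset.insert_subset_insert _
            ((Finset.erase_subset _ _).trans hsub)
        · have hnotin' : u i ∉ (S k).erase u' := fun h => hnotin (Finset.mem_of_mem_erase h)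
          rw [hsum', hSeq, Finset.sum_insert hnotin',
            Finset.sum_erase_eq_sub hu'S, mul_add]
          have h1 : w (u i) ≤ (c / (c - 1)) * (w (u i) - w u') := by
            rw [div_mul_eq_mul_div, le_div_iff₀ hc1]
            nlinarith
          have : (c / (c - 1)) * (w (u i) + (∑ x ∈ S k, w x - w u'))
              = (c / (c - 1)) * (w (u i) - w u') + (c / (c - 1)) * ∑ x ∈ S k, w x := by
            ring
          linarith [this ▸ le_refl ((c / (c-1)) * (w (u i) + (∑ x ∈ S k, w x - w u')))]
      
  obtain ⟨_, hfin⟩ := key n le_rfl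
  have : Finset.univ.filter (fun i : Fin n => (i : ℕ) < n) = Finset.univ := by
    ext j; simp [j.isLt]
  rwa [this] at hfin
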